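/- arXiv:1511.00163 — 2 statements merged into one kernel-verified Lean document; each statement's English description precedes it below -/
import Mathlib

section
/- For the L²-projection onto linear polynomials on I_n of length k_n, (Π_k v)'(t) = (6/k_n³) ∫_{I_n} (t_n − s)(s − t_{n-1}) v'(s) ds for any absolutely continuous v on I_n and any t. -/
open MeasureTheory

/-- The local L²-projection onto linear polynomials on (a,b), via its
explicit formula. -/
noncomputable def projL2 (a b : ℝ) (v : ℝ → ℝ) (t : ℝ) : ℝ :=
  (12 / (b - a) ^ 3) * (t - (a + b) / 2) *
      (∫ s in a..b, (s - (a + b) / 2) * v s)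
    + (1 / (b - a)) * ∫ s in a..b, v s

theorem stmt_9 (a b : ℝ) (hab : a < b) (v v' : ℝ → ℝ)
    (hderiv : ∀ s ∈ Set.Icc a b, HasDerivAt v (v' s) s)
    (hint : IntervalIntegrable v' volume a b) :
    ∀ t : ℝ,
      deriv (projL2 a b v) t
        = (6 / (b - a) ^ 3) * ∫ s in a..b, (b - s) * (s - a) * v' s := by
  intro t
  set m : ℝ := (a + b) / 2 with hm
  -- Step 1: compute the derivative in t
  have hd : HasDerivAt (projL2 a b v)
      ((12 / (b - a) ^ 3) * (∫ s in a..b, (s - m) * v s)) t := by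
    have h1 : HasDerivAt (fun t : ℝ => (12 / (b - a) ^ 3) * (t - m))
        (12 / (b - a) ^ 3) t := by
      simpa using ((hasDerivAt_id t).sub_const m).const_mul (12 / (b - a) ^ 3)
    have h2 := (h1.mul_const (∫ s in a..b, (s - m) * v s)).add_const
      ((1 / (b - a)) * ∫ s in a..b, v s)
    exact h2
  rw [hd.deriv]
  -- Step 2: integration by parts
  have huIcc : Set.uIcc a b = Set.Icc a b := Set.uIcc_of_le hab.le
  have hu : ∀ x ∈ Set.uIcc a b,
      HasDerivAt (fun s : ℝ => -(1/2) * ((b - s) * (s - a))) (x - m) x := by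
    intro x _
    have : HasDerivAt (fun s : ℝ => -(1/2) * ((b - s) * (s - a)))
        (-(1/2) * ((0 - 1) * (x - a) + (b - x) * 1)) x := by
      simpa using (((hasDerivAt_const x b).sub (hasDerivAt_id x)).mul
        ((hasDerivAt_id x).sub_const a)).const_mul (-(1/2 : ℝ))
    convert this using 1
    rw [hm]; ring
  have hv : ∀ x ∈ Set.uIcc a b, HasDerivAt v (v' x) x := by
    intro x hx; exact hderiv x (huIcc ▸ hx)
  have hu' : IntervalIntegrable (fun x : ℝ => x - m) volume a b :=
    (continuous_id.sub continuous_const).intervalIntegrable a b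
  have hparts := intervalIntegral.integral_mul_deriv_eq_deriv_mul hu hv hu' hint
  have hib : -(1/2 : ℝ) * ((b - b) * (b - a)) = 0 := by ring
  have hia : -(1/2 : ℝ) * ((b - a) * (a - a)) = 0 := by ring
  rw [hib, hia] at hparts
  simp only [zero_mul, sub_zero, zero_sub] at hparts
  -- hparts : ∫ x in a..b, -(1/2) * ((b-x)*(x-a)) * v' x = - ∫ x in a..b, (x - m) * v x
  have key : (∫ s in a..b, (s - m) * v s)
      = (1/2) * ∫ s in a..b, (b - s) * (s - a) * v' s := by
    have h3 : (∫ x in a..b, -(1/2) * ((b - x) * (x - a)) * v' x)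
        = -(1/2) * ∫ x in a..b, (b - x) * (x - a) * v' x := by
      rw [← intervalIntegral.integral_const_mul]
      congr 1; funext x; ring
    rw [h3] at hparts
    linarith [hparts]
  rw [key]; ring
end

section
/- Let 0 < μ < 1, T > 0, and σ > 0. If the step sizes satisfy k_n ≤ γ k t_n^{1−1/γ} with k ≤ T, then for 2 ≤ n ≤ N, k_n^{4−μ} t_n^{2(σ−2)} ≤ C k^{min{γ(2σ−μ), 4−μ}} for a constant C depending only on γ, σ, μ, and T, provided 1 ≤ γ ≤ (4−μ)/(2σ−μ) and σ > μ/2. -/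
set_option maxHeartbeats 1000000 in
theorem stmt_15 (μ T σ γ : ℝ) (hμ0 : 0 < μ) (hμ1 : μ < 1) (hT : 0 < T)
    (hσ : μ / 2 < σ) (hγ1 : 1 ≤ γ) (hγ2 : γ ≤ (4 - μ) / (2 * σ - μ)) :
    ∃ C > 0, ∀ (N n : ℕ), 2 ≤ n → n ≤ N →
      ∀ k : ℝ,
        -- k bounds all the steps of the graded mesh t_j = (j/N)^γ T
        (∀ j : ℕ, 1 ≤ j → j ≤ N →
          ((j : ℝ) / (N : ℝ)) ^ γ * T - (((j : ℝ) - 1) / (N : ℝ)) ^ γ * T ≤ k) →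
        k ≤ T →
        (((n : ℝ) / (N : ℝ)) ^ γ * T - (((n : ℝ) - 1) / (N : ℝ)) ^ γ * T) ^ (4 - μ)
            * (((n : ℝ) / (N : ℝ)) ^ γ * T) ^ (2 * (σ - 2))
          ≤ C * k ^ min (γ * (2 * σ - μ)) (4 - μ) := by
  have hγ0 : (0:ℝ) < γ := lt_of_lt_of_le one_pos hγ1
  have hsm : (0:ℝ) < 2 * σ - μ := by linarith
  have hE : γ * (2 * σ - μ) ≤ 4 - μ := (le_div_iff₀ hsm).mp hγ2
  refine ⟨γ ^ (4 - μ) * T ^ ((2 * σ - μ) * (1 - γ)), by positivity, ?_⟩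
  intro N n hn2 hnN k hstep hkT
  rw [min_eq_left hE]
  set x : ℝ := (n : ℝ) with hxdef
  set y : ℝ := (N : ℝ) with hydef
  have hx2 : (2:ℝ) ≤ x := by rw [hxdef]; exact_mod_cast hn2
  have hxy : x ≤ y := by rw [hxdef, hydef]; exact_mod_cast hnN
  have hx0 : (0:ℝ) < x := by linarith
  have hx1 : (1:ℝ) ≤ x := by linarith
  have hy0 : (0:ℝ) < y := by linarith
  have hy2 : (2:ℝ) ≤ y := by linarith
  have hN1 : 1 ≤ N := le_trans (by omega) hnN
  -- positivity of k
  have hk0 : 0 < k := by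
    have h1 := hstep 1 le_rfl hN1
    rw [Nat.cast_one] at h1
    have h0 : ((1:ℝ) - 1) / y = 0 := by norm_num
    rw [h0, Real.zero_rpow (ne_of_gt hγ0), zero_mul, sub_zero] at h1
    have : 0 < ((1:ℝ)/y) ^ γ * T :=
      mul_pos (Real.rpow_pos_of_pos (by positivity) _) hT
    linarith
  -- T / y ≤ k
  have hky : T / y ≤ k := by
    have hN := hstep N hN1 le_rfl
    rw [← hydef] at hN
    have hyy : (y / y) = 1 := div_self (ne_of_gt hy0)
    rw [hyy, Real.one_rpow, one_mul] at hN
    have hb0 : (0:ℝ) < (y - 1) / y := div_pos (by linarith) hy0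
    have hb1 : (y - 1) / y ≤ 1 := by
      rw [div_le_one hy0]; linarith
    have hpow : ((y - 1) / y) ^ γ ≤ ((y - 1) / y) ^ (1:ℝ) :=
      Real.rpow_le_rpow_of_exponent_ge hb0 hb1 hγ1
    rw [Real.rpow_one] at hpow
    have : T - (y - 1) / y * T ≤ T - ((y - 1) / y) ^ γ * T := by
      nlinarith
    have heq : T - (y - 1) / y * T = T / y := by
      field_simp; ring
    linarith [heq ▸ this]
  -- the step bound : k_n ≤ γ * T * x^(γ-1) / y^γ
  have hkn_pos : 0 < (x / y) ^ γ * T - ((x - 1) / y) ^ γ * T := by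
    have hlt : ((x - 1) / y) ^ γ < (x / y) ^ γ :=
      Real.rpow_lt_rpow (div_nonneg (by linarith) (le_of_lt hy0))
        ((div_lt_div_iff_of_pos_right hy0).mpr (by linarith)) hγ0
    nlinarith [mul_lt_mul_of_pos_right hlt hT]
  have hA : (x / y) ^ γ * T - ((x - 1) / y) ^ γ * T ≤ γ * T * x ^ (γ - 1) / y ^ γ := by
    -- Bernoulli : 1 + γ * (-(1/x)) ≤ (1 - 1/x)^γ
    have hber : 1 + γ * (-(1/x)) ≤ (1 + -(1/x)) ^ γ := by
      apply one_add_mul_self_le_rpow_one_add _ hγ1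
      have : 1 / x ≤ 1 := by rw [div_le_one hx0]; linarith
      linarith
    have h1 : (1:ℝ) + -(1/x) = (x - 1) / x := by field_simp; ring
    rw [h1] at hber
    -- multiply by x^γ : x^γ - γ x^(γ-1) ≤ (x-1)^γ
    have hxg : (0:ℝ) < x ^ γ := Real.rpow_pos_of_pos hx0 _
    have hmul : x ^ γ * ((x - 1) / x) ^ γ = (x - 1) ^ γ := by
      rw [← Real.mul_rpow (le_of_lt hx0) (div_nonneg (by linarith) hx0.le)]
      congr 1
      field_simp
    have hkey : x ^ γ - γ * x ^ (γ - 1) ≤ (x - 1) ^ γ := by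
      have h2 : x ^ γ * (1 + γ * (-(1/x))) ≤ x ^ γ * ((x - 1) / x) ^ γ :=
        mul_le_mul_of_nonneg_left hber (le_of_lt hxg)
      rw [hmul] at h2
      have h3 : x ^ γ * (1 + γ * (-(1/x))) = x ^ γ - γ * x ^ (γ - 1) := by
        rw [Real.rpow_sub_one (ne_of_gt hx0)]
        field_simp
        ring
      linarith [h3 ▸ h2]
    -- now rewrite the mesh quantities
    have hdx : (x / y) ^ γ = x ^ γ / y ^ γ := Real.div_rpow (le_of_lt hx0) hy0.le _
    have hdx1 : ((x - 1) / y) ^ γ = (x - 1) ^ γ / y ^ γ := Real.div_rpow (by linarith) hy0.le _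
    rw [hdx, hdx1]
    have hyg : (0:ℝ) < y ^ γ := Real.rpow_pos_of_pos hy0 _
    rw [div_mul_eq_mul_div, div_mul_eq_mul_div, div_sub_div_same, div_le_div_iff₀ hyg hyg]
    nlinarith [mul_le_mul_of_nonneg_right hkey (mul_pos hT hyg).le]
  -- log comparison
  set tn : ℝ := (x / y) ^ γ * T with htn
  set kn : ℝ := (x / y) ^ γ * T - ((x - 1) / y) ^ γ * T with hkn
  have htn0 : 0 < tn := mul_pos (Real.rpow_pos_of_pos (by positivity) _) hT
  have hL0 : 0 < kn ^ (4 - μ) * tn ^ (2 * (σ - 2)) :=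
    mul_pos (Real.rpow_pos_of_pos hkn_pos _) (Real.rpow_pos_of_pos htn0 _)
  have hR0 : 0 < γ ^ (4 - μ) * T ^ ((2 * σ - μ) * (1 - γ)) * k ^ (γ * (2 * σ - μ)) := by
    positivity
  rw [← Real.log_le_log_iff hL0 hR0]
  have hBnd : 0 < γ * T * x ^ (γ - 1) / y ^ γ := by positivity
  have hlogkn : Real.log kn ≤
      Real.log γ + Real.log T + (γ - 1) * Real.log x - γ * Real.log y := by
    calc Real.log kn ≤ Real.log (γ * T * x ^ (γ - 1) / y ^ γ) :=
          (Real.log_le_log_iff hkn_pos hBnd).mpr hA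
      _ = Real.log γ + Real.log T + (γ - 1) * Real.log x - γ * Real.log y := by
          rw [Real.log_div (by positivity) (by positivity),
            Real.log_mul (by positivity) (by positivity),
            Real.log_mul (ne_of_gt hγ0) (ne_of_gt hT),
            Real.log_rpow hx0, Real.log_rpow hy0]
  have hlogtn : Real.log tn = γ * (Real.log x - Real.log y) + Real.log T := by
    rw [htn, Real.log_mul (by positivity) (ne_of_gt hT), Real.log_rpow (by positivity),
      Real.log_div (ne_of_gt hx0) (ne_of_gt hy0)]
  have hlogk : Real.log T - Real.log y ≤ Real.log k := by
    have := (Real.log_le_log_iff (by positivity) hk0).mpr hky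
    rwa [Real.log_div (ne_of_gt hT) (ne_of_gt hy0)] at this
  have hLx : 0 ≤ Real.log x := Real.log_nonneg hx1
  rw [Real.log_mul (by positivity) (by positivity),
    Real.log_mul (by positivity) (by positivity),
    Real.log_mul (by positivity) (by positivity),
    Real.log_rpow hkn_pos, Real.log_rpow htn0, Real.log_rpow hγ0, Real.log_rpow hT,
    Real.log_rpow hk0]
  have h4μ : (0:ℝ) ≤ 4 - μ := by linarith
  nlinarith [mul_le_mul_of_nonneg_left hlogkn h4μ,
    mul_nonneg (sub_nonneg.mpr hE) hLx,
    mul_nonneg (mul_pos hγ0 hsm).le (sub_nonneg.mpr (by linarith [hlogk] : Real.log T - Real.log y ≤ Real.log k)),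
    hlogtn]
end
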